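/- Principle of Minimal Free Energy (Theorem 5, Markov form): Let S be a countable set, Φ : S → ℝ, β > 0, with Z = Σ_{A∈S} e^{−βΦ(A)} finite. Let P, Q : S × S → [0,1] satisfy Σ_{B∈S} P(B|A) = 1 for every A, Σ_{A∈S} Q(A|B) = 1 for every B, and the generalized detailed-balance relation P(B|A) e^{−βΦ(A)} = Q(A|B) e^{−βΦ(B)} for all A, B. Let p be a probability mass function on S and p'(B) = Σ_{A∈S} P(B|A) p(A). Assuming the sums Σ_A |p(A)(Φ(A) + β⁻¹ log p(A))| and Σ_B |p'(B)(Φ(B) + β⁻¹ log p'(B))| converge, the coarse-grained free energy F[p] = Σ_{A∈S} p(A)(Φ(A) + β⁻¹ log p(A)) is non-increasing: F[p'] ≤ F[p]. -/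

import Mathlib

/-- Gibbs tangent inequality: for `a,b ≥ 0`, `t > 0`, with `b = 0 → a = 0`,
`a log t + (a - t b) ≤ a (log a - log b)`. -/
lemma gibbs_term {a b t : ℝ} (ha : 0 ≤ a) (hb : 0 ≤ b) (ht : 0 < t)
    (hab : b = 0 → a = 0) :
    a * Real.log t + (a - t * b) ≤ a * (Real.log a - Real.log b) := by
  rcases ha.eq_or_lt with h0 | ha'
  · rw [← h0]
    have : 0 ≤ t * b := by positivity
    simp; linarith
  · have hb' : 0 < b := by
      rcases hb.eq_or_lt with h | h
      · exact absurd (hab h.symm) ha'.ne'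
      · exact h
    have h1 : Real.log (t * b / a) ≤ t * b / a - 1 :=
      Real.log_le_sub_one_of_pos (by positivity)
    have h2 : Real.log (t * b / a) = Real.log t + Real.log b - Real.log a := by
      rw [Real.log_div (by positivity) ha'.ne', Real.log_mul ht.ne' hb'.ne']
    have h3 : a * (t * b / a - 1) = t * b - a := by field_simp
    have h4 := mul_le_mul_of_nonneg_left h1 ha
    rw [h2, h3] at h4
    nlinarith

set_option maxHeartbeats 1000000 in
/-- **Principle of Minimal Free Energy** (Theorem 5, Markov form): on a countable set `S`
of Boltzmann macro-states with Boltzmann free energies `Φ`, inverse temperature `β > 0`,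
finite partition sum `Σ_A e^{−βΦ(A)}`, forward/backward transition probabilities `P`, `Q`
satisfying the generalized detailed-balance relation
`P(B|A) e^{−βΦ(A)} = Q(A|B) e^{−βΦ(B)}`, the coarse-grained free energy
`F[p] = Σ_A p(A)(Φ(A) + β⁻¹ log p(A))` does not increase under one Markov step:
`F[p'] ≤ F[p]` with `p'(B) = Σ_A P(B|A) p(A)`. Here `P B A` denotes `P(B|A)` and
`Q A B` denotes `Q(A|B)`. -/
theorem principle_of_minimal_free_energy {S : Type*} [Countable S]
    (Φ : S → ℝ) (β : ℝ) (hβ : 0 < β)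
    (hZ : Summable (fun A => Real.exp (-β * Φ A)))
    (P Q : S → S → ℝ)
    (hP0 : ∀ B A, 0 ≤ P B A) (hP1 : ∀ B A, P B A ≤ 1)
    (hQ0 : ∀ A B, 0 ≤ Q A B) (hQ1 : ∀ A B, Q A B ≤ 1)
    (hProw : ∀ A, HasSum (fun B => P B A) 1)
    (hQrow : ∀ B, HasSum (fun A => Q A B) 1)
    (hdb : ∀ A B, P B A * Real.exp (-β * Φ A) = Q A B * Real.exp (-β * Φ B))
    (p : S → ℝ) (hp0 : ∀ A, 0 ≤ p A) (hp1 : ∀ A, p A ≤ 1) (hpsum : HasSum p 1)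
    (p' : S → ℝ) (hp'def : ∀ B, p' B = ∑' A, P B A * p A)
    (hsum : Summable (fun A => |p A * (Φ A + β⁻¹ * Real.log (p A))|))
    (hsum' : Summable (fun B => |p' B * (Φ B + β⁻¹ * Real.log (p' B))|)) :
    ∑' B, p' B * (Φ B + β⁻¹ * Real.log (p' B))
      ≤ ∑' A, p A * (Φ A + β⁻¹ * Real.log (p A)) := by
  have hβ0 : β ≠ 0 := hβ.ne'
  set π : S → ℝ := fun A => Real.exp (-β * Φ A) with hπdef
  have hπ : ∀ A, 0 < π A := fun A => Real.exp_pos _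
  have hlogπ : ∀ A, Real.log (π A) = -β * Φ A := fun A => Real.log_exp _
  set c : S → ℝ := fun A => p A * (Real.log (p A) - Real.log (π A)) with hcdef
  -- c A = β * (the summand of F[p])
  have hc_eq : ∀ A, c A = β * (p A * (Φ A + β⁻¹ * Real.log (p A))) := by
    intro A
    have h := mul_inv_cancel₀ hβ0
    simp only [hcdef, hlogπ]
    linear_combination (-(p A * Real.log (p A))) * h
  have hc_abs : Summable fun A => |c A| := by
    have := hsum.mul_left β
    refine this.congr fun A => ?_
    simp only [hc_eq, abs_mul, abs_of_pos hβ]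
  have hc_sum : Summable c := summable_abs_iff.mp hc_abs
  set φ : S → S → ℝ := fun A B => P B A * c A with hφdef
  -- row sums of φ
  have hφrow : ∀ A, HasSum (fun B => φ A B) (c A) := by
    intro A
    simpa using (hProw A).mul_right (c A)
  -- summability of |φ| on the product
  have hφabs : Summable fun x : S × S => |φ x.1 x.2| := by
    refine (summable_prod_of_nonneg (fun x => abs_nonneg _)).mpr ⟨?_, ?_⟩
    · intro A
      refine ((hProw A).summable.mul_right |c A|).congr fun B => ?_
      simp only [hφdef, abs_mul, abs_of_nonneg (hP0 B A)]
    · refine hc_abs.congr fun A => ?_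
      have : (fun B => |φ A B|) = fun B => P B A * |c A| := by
        funext B; simp only [hφdef, abs_mul, abs_of_nonneg (hP0 B A)]
      rw [this, ((hProw A).mul_right |c A|).tsum_eq, one_mul]
  have hφunc : Summable (Function.uncurry φ) :=
    summable_abs_iff.mp hφabs
  have hφabs_swap : Summable fun x : S × S => |φ x.2 x.1| := hφabs.prod_symm
  have hφcol_abs : ∀ B, Summable fun A => |φ A B| := fun B =>
    hφabs_swap.prod_factor B
  have hφcol : ∀ B, Summable fun A => φ A B := fun B =>
    summable_abs_iff.mp (hφcol_abs B)
  have hφcol_tsum_abs : Summable fun B => ∑' A, |φ A B| :=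
    hφabs_swap.prod
  -- per-B sums
  have hPp_sum : ∀ B, Summable fun A => P B A * p A := by
    intro B
    refine Summable.of_nonneg_of_le (fun A => mul_nonneg (hP0 B A) (hp0 A))
      (fun A => ?_) hpsum.summable
    calc P B A * p A ≤ 1 * p A := mul_le_mul_of_nonneg_right (hP1 B A) (hp0 A)
    _ = p A := one_mul _
  have hp'hs : ∀ B, HasSum (fun A => P B A * p A) (p' B) := by
    intro B; rw [hp'def]; exact (hPp_sum B).hasSum
  have hπ'hs : ∀ B, HasSum (fun A => P B A * π A) (π B) := by
    intro B
    have : (fun A => P B A * π A) = fun A => Q A B * π B := by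
      funext A; exact hdb A B
    rw [this]
    simpa using (hQrow B).mul_right (π B)
  have hp'0 : ∀ B, 0 ≤ p' B := fun B =>
    (hp'hs B).nonneg fun A => mul_nonneg (hP0 B A) (hp0 A)
  -- the key per-B inequality
  have key : ∀ B, p' B * (Real.log (p' B) - Real.log (π B)) ≤ ∑' A, φ A B := by
    intro B
    rcases (hp'0 B).eq_or_lt with h0 | hpos
    · -- p' B = 0 : every term vanishes
      have hz : ∀ A, P B A * p A = 0 := by
        have := (hasSum_zero_iff_of_nonneg
          (fun A => mul_nonneg (hP0 B A) (hp0 A))).mp (h0 ▸ hp'hs B)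
        intro A; exact congrFun this A
      have hφz : ∀ A, φ A B = 0 := by
        intro A
        rcases mul_eq_zero.mp (hz A) with h | h
        · simp [hφdef, h]
        · simp [hφdef, hcdef, h]
      rw [← h0]
      simp only [zero_mul]
      rw [tsum_congr hφz, tsum_zero]
    · set t : ℝ := p' B / π B with htdef
      have ht : 0 < t := div_pos hpos (hπ B)
      -- pointwise Gibbs inequality
      have hpt : ∀ A, P B A * p A * Real.log t
          + (P B A * p A - t * (P B A * π A)) ≤ φ A B := by
        intro A
        have h1 := gibbs_term (mul_nonneg (hP0 B A) (hp0 A))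
          (mul_nonneg (hP0 B A) (hπ A).le) ht
          (fun h => by
            rcases mul_eq_zero.mp h with h | h
            · rw [h, zero_mul]
            · exact absurd h (hπ A).ne')
        refine h1.trans (le_of_eq ?_)
        rcases (hP0 B A).eq_or_lt with hP | hP
        · simp [hφdef, ← hP]
        · rcases (hp0 A).eq_or_lt with hp | hp
          · simp [hφdef, hcdef, ← hp]
          · rw [Real.log_mul hP.ne' hp.ne', Real.log_mul hP.ne' (hπ A).ne']
            simp only [hφdef, hcdef]
            ring
      -- sum of the left-hand sides
      have hLhs : HasSum (fun A => P B A * p A * Real.log t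
          + (P B A * p A - t * (P B A * π A)))
          (p' B * Real.log t + (p' B - t * π B)) :=
        ((hp'hs B).mul_right (Real.log t)).add ((hp'hs B).sub ((hπ'hs B).mul_left t))
      have := hasSum_le hpt hLhs (hφcol B).hasSum
      have htπ : t * π B = p' B := by
        rw [htdef]; field_simp; exact div_self (hπ B).ne'
      rw [htπ] at this
      have hlogt : Real.log t = Real.log (p' B) - Real.log (π B) := by
        rw [htdef, Real.log_div hpos.ne' (hπ B).ne']
      rw [hlogt] at this
      linarith [this]
  -- summability of both sides of `key` in B
  have hc'_eq : ∀ B, p' B * (Real.log (p' B) - Real.log (π B))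
      = β * (p' B * (Φ B + β⁻¹ * Real.log (p' B))) := by
    intro B
    have h := mul_inv_cancel₀ hβ0
    simp only [hlogπ]
    linear_combination (-(p' B * Real.log (p' B))) * h
  have hLsummable : Summable fun B => p' B * (Real.log (p' B) - Real.log (π B)) := by
    have := (summable_abs_iff.mp hsum').mul_left β
    exact this.congr fun B => (hc'_eq B).symm
  have hRsummable : Summable fun B => ∑' A, φ A B := by
    refine Summable.of_norm_bounded hφcol_tsum_abs fun B => ?_
    have h1 : Summable fun A => ‖φ A B‖ := by
      simpa only [Real.norm_eq_abs] using hφcol_abs B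
    have h2 := norm_tsum_le_tsum_norm h1
    simpa only [Real.norm_eq_abs] using h2
  -- sum the key inequality over B and swap the double sum
  have main : ∑' B, p' B * (Real.log (p' B) - Real.log (π B)) ≤ ∑' A, c A := by
    calc ∑' B, p' B * (Real.log (p' B) - Real.log (π B))
        ≤ ∑' B, ∑' A, φ A B := Summable.tsum_le_tsum key hLsummable hRsummable
      _ = ∑' A, ∑' B, φ A B := Summable.tsum_comm hφunc
      _ = ∑' A, c A := tsum_congr fun A => (hφrow A).tsum_eq
  -- translate back to free energies
  have e1 : ∑' B, p' B * (Real.log (p' B) - Real.log (π B))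
      = β * ∑' B, p' B * (Φ B + β⁻¹ * Real.log (p' B)) :=
    (tsum_congr hc'_eq).trans tsum_mul_left
  have e2 : ∑' A, c A = β * ∑' A, p A * (Φ A + β⁻¹ * Real.log (p A)) :=
    (tsum_congr hc_eq).trans tsum_mul_left
  rw [e1, e2] at main
  exact le_of_mul_le_mul_left main hβ
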